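/- Let f : ℝ → ℝ be continuously differentiable, strictly increasing on [0,∞), with f(0) = 0, f strictly convex on [0,γ₀] and strictly concave on [γ₀,∞) for some γ₀ > 0 (S-shaped), and f bounded above with limit 1 at infinity. Then there exists a unique γ* > 0 satisfying f(γ*) = γ* · f'(γ*). -/

import Mathlib

open Set

theorem unique_optimal_sinr
    (f : ℝ → ℝ) (γ₀ : ℝ) (hγ₀ : 0 < γ₀)
    (hC1 : ContDiff ℝ 1 f)
    (hmono : StrictMonoOn f (Ici 0))
    (hf0 : f 0 = 0)
    (hconv : StrictConvexOn ℝ (Icc 0 γ₀) f)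
    (hconc : StrictConcaveOn ℝ (Ici γ₀) f)
    (hbdd : BddAbove (Set.range f))
    (hlim : Filter.Tendsto f Filter.atTop (nhds 1)) :
    ∃! γ : ℝ, 0 < γ ∧ f γ = γ * deriv f γ := by
  have hdiff : Differentiable ℝ f := hC1.differentiable one_ne_zero
  have hderiv_cont : Continuous (deriv f) := hC1.continuous_deriv le_rfl
  set h : ℝ → ℝ := fun γ => γ * deriv f γ - f γ with hh
  have hcont : Continuous h := (continuous_id.mul hderiv_cont).sub hC1.continuous
  -- On (0, γ₀], h > 0
  have hpos : ∀ γ ∈ Ioc (0 : ℝ) γ₀, 0 < h γ := by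
    intro γ hγ
    have hslope := hconv.slope_lt_deriv (x := 0) (y := γ)
      ⟨le_rfl, hγ₀.le⟩ ⟨hγ.1.le, hγ.2⟩ hγ.1 (hdiff γ)
    rw [slope_def_field, hf0, sub_zero, sub_zero, div_lt_iff₀ hγ.1] at hslope
    simp only [hh]
    linarith
  -- h is strictly antitone on [γ₀, ∞)
  have hanti : StrictAntiOn h (Ici γ₀) := by
    intro a ha b hb hab
    have h1 : deriv f b < slope f a b := hconc.deriv_lt_slope ha hb hab (hdiff b)
    have h2 : slope f a b < deriv f a := hconc.slope_lt_deriv ha hb hab (hdiff a)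
    rw [slope_def_field, lt_div_iff₀ (by linarith : (0:ℝ) < b - a)] at h1
    have h3 : deriv f b < deriv f a := by
      have := hconc.slope_lt_deriv ha hb hab (hdiff a)
      have := hconc.deriv_lt_slope ha hb hab (hdiff b)
      linarith
    have haγ : γ₀ ≤ a := ha
    simp only [hh]
    nlinarith
  -- find b with h b < 0
  obtain ⟨M, hM⟩ : ∃ M, ∀ x ≥ M, |f x - 1| < 1/8 := by
    have := (Metric.tendsto_atTop.mp hlim) (1/8) (by norm_num)
    obtain ⟨M, hM⟩ := this
    exact ⟨M, fun x hx => by simpa [Real.dist_eq] using hM x hx⟩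
  set m : ℝ := max γ₀ M with hm
  have hmγ : γ₀ ≤ m := le_max_left _ _
  have hmM : M ≤ m := le_max_right _ _
  have hm0 : 0 < m := lt_of_lt_of_le hγ₀ hmγ
  set b : ℝ := 2 * m with hbdef
  have hmb : m < b := by simp only [hbdef]; linarith
  have hbγ : γ₀ < b := lt_of_le_of_lt hmγ hmb
  have hfm : |f m - 1| < 1/8 := hM m hmM
  have hfb : |f b - 1| < 1/8 := hM b (by linarith)
  rw [abs_lt] at hfm hfb
  have hslb : deriv f b < slope f m b :=
    hconc.deriv_lt_slope hmγ (le_of_lt hbγ) hmb (hdiff b)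
  rw [slope_def_field, lt_div_iff₀ (by linarith : (0:ℝ) < b - m)] at hslb
  have hbm : b - m = m := by simp only [hbdef]; ring
  have hbneg : h b < 0 := by
    simp only [hh]
    -- deriv f b * m < f b - f m < 1/4, so b * deriv f b < 1/2 < f b
    rw [hbm] at hslb
    nlinarith
  -- IVT on [γ₀, b]
  have hγ₀pos : 0 < h γ₀ := hpos γ₀ ⟨hγ₀, le_rfl⟩
  have hmem : (0 : ℝ) ∈ Icc (h b) (h γ₀) := ⟨hbneg.le, hγ₀pos.le⟩
  obtain ⟨c, hc, hc0⟩ := intermediate_value_Icc' hbγ.le hcont.continuousOn hmem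
  have hcγ₀ : γ₀ < c := by
    rcases eq_or_lt_of_le hc.1 with h' | h'
    · exfalso; rw [h', hc0] at hγ₀pos; exact lt_irrefl _ hγ₀pos
    · exact h'
  refine ⟨c, ⟨lt_trans hγ₀ hcγ₀, by simp only [hh] at hc0; linarith⟩, ?_⟩
  rintro γ ⟨hγpos, hγeq⟩
  have hγ0 : h γ = 0 := by simp only [hh]; linarith
  have hγγ₀ : γ₀ < γ := by
    by_contra hle
    push_neg at hle
    have := hpos γ ⟨hγpos, hle⟩
    rw [hγ0] at this; exact lt_irrefl _ this
  have : h γ = h c := by rw [hγ0, hc0]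
  exact hanti.injOn hγγ₀.le hcγ₀.le this
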